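/- Quadratic closeness for the adjoint eigenfunctions (Remark 3.21(i)). Let N ∈ ℕ and let (μₙ)_{n ∈ ℤ, |n| > N} be complex numbers such that |μₙ − n| ≤ |aₙ(K)| ≤ 1/(4π) for all |n| > N. For n ∈ ℤ define ψₙ(x) = (2π)^{−1/2} e^{−inx} and, for |n| > N, define φ̃ₙ(x) = (2π)^{−1/2} e^{−iμₙ x}. Then Σ_{|n| > N} ‖ψₙ − φ̃ₙ‖²_{L²(0,2π)} < ∞. -/

import Mathlib

open MeasureTheory Real Complex

/-- `aₙ(K) = (2π)^{−1/2} ∫₀^{2π} e^{int} K(t) dt`. -/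
noncomputable def aCoeff (K : ℝ → ℂ) (n : ℤ) : ℂ :=
  (Real.sqrt (2 * Real.pi))⁻¹ * ∫ t in (0:ℝ)..(2 * Real.pi), Complex.exp (Complex.I * n * t) * K t

section aux

local notation "μ₀" => MeasureTheory.volume.restrict (Set.Ioo (0:ℝ) (2 * Real.pi))

lemma psi_cont (n : ℤ) :
    Continuous (fun x : ℝ => (Real.sqrt (2 * Real.pi))⁻¹ * Complex.exp (-(Complex.I * n * x))) := by
  fun_prop

lemma memLp_psi (n : ℤ) :
    MemLp (fun x : ℝ => (Real.sqrt (2 * Real.pi))⁻¹ * Complex.exp (-(Complex.I * n * x))) 2 μ₀ := by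
  haveI : Fact ((volume : Measure ℝ) (Set.Ioo 0 (2 * Real.pi)) < ⊤) :=
    ⟨measure_Ioo_lt_top⟩
  refine MemLp.of_bound ((psi_cont n).aestronglyMeasurable) ((Real.sqrt (2 * Real.pi))⁻¹) ?_
  filter_upwards with x
  have h1 : ‖Complex.exp (-(Complex.I * n * x))‖ = 1 := by
    rw [Complex.norm_exp]
    simp
  rw [norm_mul, h1, mul_one, Complex.norm_real, Real.norm_eq_abs,
    _root_.abs_of_nonneg (by positivity)]

lemma integral_exp_int (k : ℤ) :
    (∫ x in (0:ℝ)..(2 * Real.pi), Complex.exp (Complex.I * k * x)) =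
      if k = 0 then (2 * Real.pi : ℂ) else 0 := by
  rcases eq_or_ne k 0 with hk | hk
  · simp [hk, two_pi_pos.le]
  · have hc : (Complex.I * k : ℂ) ≠ 0 := by
      simp [Complex.I_ne_zero, Int.cast_injective, hk]
    rw [if_neg hk]
    have := integral_exp_mul_complex (a := 0) (b := 2 * Real.pi) hc
    rw [this]
    have h2 : Complex.exp (Complex.I * k * ((2 * Real.pi : ℝ) : ℂ)) = 1 := by
      rw [show (Complex.I * k * ((2 * Real.pi : ℝ) : ℂ)) = k * (2 * Real.pi * Complex.I) by
        push_cast; ring]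
      exact Complex.exp_int_mul_two_pi_mul_I k
    rw [h2]
    simp

lemma orthonormal_psi :
    Orthonormal ℂ (fun n : ℤ => (memLp_psi n).toLp _) := by
  rw [orthonormal_iff_ite]
  intro n m
  rw [MeasureTheory.L2.inner_def]
  have hint : ∫ a, (inner ℂ ((memLp_psi n).toLp _ a) ((memLp_psi m).toLp _ a)) ∂μ₀ =
      ∫ a in Set.Ioo (0:ℝ) (2 * Real.pi),
        ((Real.sqrt (2 * Real.pi))⁻¹ : ℂ) * (Real.sqrt (2 * Real.pi))⁻¹ *
          Complex.exp (Complex.I * ((n : ℂ) - m) * a) := by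
    refine integral_congr_ae ?_
    filter_upwards [(memLp_psi n).coeFn_toLp, (memLp_psi m).coeFn_toLp] with a hn hm
    rw [hn, hm]
    rw [RCLike.inner_apply]
    simp only [map_mul, Complex.conj_ofReal, ← Complex.exp_conj]
    rw [show ((starRingEnd ℂ) (-(Complex.I * n * a))) = Complex.I * n * a by
      simp [Complex.ext_iff]]
    rw [show (Complex.I * ((n : ℂ) - m) * a) = Complex.I * n * a + -(Complex.I * m * a) by
      push_cast; ring, Complex.exp_add]
    push_cast
    ring
  rw [hint, integral_const_mul, ← MeasureTheory.integral_Ioc_eq_integral_Ioo,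
    ← intervalIntegral.integral_of_le two_pi_pos.le]
  have : ((n : ℂ) - m) = ((n - m : ℤ) : ℂ) := by push_cast; ring
  rw [this, integral_exp_int (n - m)]
  rcases eq_or_ne n m with h | h
  · rw [if_pos h, if_pos (by omega : n - m = 0)]
    push_cast
    rw [← mul_inv, ← Complex.ofReal_mul, Real.mul_self_sqrt two_pi_pos.le]
    rw [show (2 * (Real.pi : ℂ)) = ((2 * Real.pi : ℝ) : ℂ) by push_cast; ring]
    exact inv_mul_cancel₀ (Complex.ofReal_ne_zero.2 two_pi_pos.ne')
  · rw [if_neg h, if_neg (by omega : ¬ n - m = 0)]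
    simp

lemma aCoeff_eq_inner (K : ℝ → ℂ) (hK : MemLp K 2 μ₀) (n : ℤ) :
    (inner ℂ ((memLp_psi n).toLp _) (hK.toLp K)) = aCoeff K n := by
  rw [MeasureTheory.L2.inner_def]
  have hint : ∫ a, (inner ℂ ((memLp_psi n).toLp _ a) ((hK.toLp K) a)) ∂μ₀ =
      ∫ a in Set.Ioo (0:ℝ) (2 * Real.pi),
        ((Real.sqrt (2 * Real.pi))⁻¹ : ℂ) * (Complex.exp (Complex.I * n * a) * K a) := by
    refine integral_congr_ae ?_
    filter_upwards [(memLp_psi n).coeFn_toLp, hK.coeFn_toLp] with a hn hm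
    rw [hn, hm, RCLike.inner_apply]
    simp only [map_mul, Complex.conj_ofReal, ← Complex.exp_conj]
    rw [show ((starRingEnd ℂ) (-(Complex.I * n * a))) = Complex.I * n * a by
      simp [Complex.ext_iff]]
    push_cast
    ring
  rw [hint, integral_const_mul, ← MeasureTheory.integral_Ioc_eq_integral_Ioo,
    ← intervalIntegral.integral_of_le two_pi_pos.le, aCoeff]
  norm_cast

lemma summable_aCoeff_sq (K : ℝ → ℂ) (hK : MemLp K 2 μ₀) :
    Summable (fun n : ℤ => ‖aCoeff K n‖ ^ 2) := by
  have h := orthonormal_psi.inner_products_summable (x := hK.toLp K)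
  refine h.congr fun n => ?_
  rw [aCoeff_eq_inner K hK n]

end aux

/-- Quadratic closeness of the adjoint eigenfunctions to the Fourier basis
(Remark 3.21(i)): if `|μₙ − n| ≤ |aₙ(K)| ≤ 1/(4π)` for `|n| > N`, then
`Σ_{|n| > N} ‖ψₙ − φ̃ₙ‖²_{L²(0,2π)} < ∞`, where `φ̃ₙ(x) = (2π)^{−1/2} e^{−iμₙx}`
and `ψₙ(x) = (2π)^{−1/2} e^{−inx}`. -/
theorem adjoint_eigenfunctions_quadratically_close
    (K : ℝ → ℂ)
    (hK : MeasureTheory.MemLp K 2 (MeasureTheory.volume.restrict (Set.Ioo 0 (2 * Real.pi))))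
    (N : ℕ) (mu : ℤ → ℂ)
    (hclose : ∀ n : ℤ, (N : ℤ) < |n| → ‖mu n - n‖ ≤ ‖aCoeff K n‖)
    (hsmall : ∀ n : ℤ, (N : ℤ) < |n| → ‖aCoeff K n‖ ≤ 1 / (4 * Real.pi)) :
    Summable (fun n : {m : ℤ // (N : ℤ) < |m|} =>
      ∫ x in (0:ℝ)..(2 * Real.pi),
        ‖(Real.sqrt (2 * Real.pi))⁻¹ * Complex.exp (-(Complex.I * (n : ℤ) * x))
          - (Real.sqrt (2 * Real.pi))⁻¹ * Complex.exp (-(Complex.I * mu n * x))‖ ^ 2) := by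
  have hsum := summable_aCoeff_sq K hK
  have hsum2 : Summable (fun n : {m : ℤ // (N : ℤ) < |m|} =>
      16 * Real.pi ^ 2 * ‖aCoeff K n.1‖ ^ 2) :=
    (hsum.comp_injective Subtype.val_injective).mul_left _
  refine Summable.of_nonneg_of_le (fun n => ?_) (fun n => ?_) hsum2
  · apply intervalIntegral.integral_nonneg two_pi_pos.le
    intro x _
    positivity
  · obtain ⟨n, hn⟩ := n
    set c : ℝ := (Real.sqrt (2 * Real.pi))⁻¹ with hc
    set D : ℝ := ‖mu n - n‖ with hD
    have hDpos : 0 ≤ D := norm_nonneg _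
    have hd : D ≤ 1 / (4 * Real.pi) := le_trans (hclose n hn) (hsmall n hn)
    have hc2 : c ^ 2 * (2 * Real.pi) = 1 := by
      rw [hc, ← Real.sqrt_inv, Real.sq_sqrt (by positivity)]
      field_simp
    have hcnn : 0 ≤ c := by positivity
    have hcont : Continuous (fun x : ℝ =>
        ‖(c : ℂ) * Complex.exp (-(Complex.I * (n : ℂ) * x))
          - (c : ℂ) * Complex.exp (-(Complex.I * mu n * x))‖ ^ 2) :=
      (continuous_norm.comp (by fun_prop)).pow 2
    have hb : ∀ x ∈ Set.Icc (0:ℝ) (2 * Real.pi),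
        ‖(c : ℂ) * Complex.exp (-(Complex.I * (n : ℂ) * x))
          - (c : ℂ) * Complex.exp (-(Complex.I * mu n * x))‖ ^ 2 ≤ 8 * Real.pi * D ^ 2 := by
      intro x hx
      have hx0 : |x| ≤ 2 * Real.pi := by
        rw [_root_.abs_of_nonneg hx.1]; exact hx.2
      have key : (c : ℂ) * Complex.exp (-(Complex.I * (n : ℂ) * x))
            - (c : ℂ) * Complex.exp (-(Complex.I * mu n * x))
          = (c : ℂ) * Complex.exp (-(Complex.I * (n : ℂ) * x))
            * (1 - Complex.exp (-(Complex.I * (mu n - (n : ℂ)) * x))) := by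
        have hme : Complex.exp (-(Complex.I * (n : ℂ) * x))
            * Complex.exp (-(Complex.I * (mu n - (n : ℂ)) * x))
            = Complex.exp (-(Complex.I * mu n * x)) := by
          rw [← Complex.exp_add]; congr 1; ring
        linear_combination (c : ℂ) * hme
      have hw : ‖-(Complex.I * (mu n - (n : ℂ)) * x)‖ = D * |x| := by
        rw [norm_neg, norm_mul, norm_mul, Complex.norm_I, one_mul, Complex.norm_real, Real.norm_eq_abs, hD]
      have hwle : ‖-(Complex.I * (mu n - (n : ℂ)) * x)‖ ≤ 1 := by
        rw [hw]
        have : D * |x| ≤ (1 / (4 * Real.pi)) * (2 * Real.pi) :=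
          mul_le_mul hd hx0 (abs_nonneg x) (by positivity)
        have hp := Real.pi_pos
        calc D * |x| ≤ (1 / (4 * Real.pi)) * (2 * Real.pi) := this
          _ = 1 / 2 := by field_simp; ring
          _ ≤ 1 := by norm_num
      have h1 : ‖(c : ℂ) * Complex.exp (-(Complex.I * (n : ℂ) * x))
            - (c : ℂ) * Complex.exp (-(Complex.I * mu n * x))‖ ≤ c * (2 * (D * |x|)) := by
        rw [key, norm_mul, norm_mul, Complex.norm_real, Real.norm_eq_abs, _root_.abs_of_nonneg hcnn]
        have he1 : ‖Complex.exp (-(Complex.I * (n : ℂ) * x))‖ = 1 := by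
          rw [Complex.norm_exp]; simp
        rw [he1, mul_one]
        refine mul_le_mul_of_nonneg_left ?_ hcnn
        calc ‖1 - Complex.exp (-(Complex.I * (mu n - (n : ℂ)) * x))‖
            = ‖Complex.exp (-(Complex.I * (mu n - (n : ℂ)) * x)) - 1‖ := by
              rw [← norm_neg, neg_sub]
          _ ≤ 2 * ‖-(Complex.I * (mu n - (n : ℂ)) * x)‖ :=
              Complex.norm_exp_sub_one_le hwle
          _ = 2 * (D * |x|) := by rw [hw]
      have h2 := pow_le_pow_left₀ (norm_nonneg _) h1 2
      refine h2.trans ?_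
      have hp := Real.pi_pos
      nlinarith [sq_nonneg D, sq_nonneg (|x|), mul_le_mul hx0 hx0 (abs_nonneg x) (by positivity : (0:ℝ) ≤ 2 * Real.pi), sq_nonneg (D * |x|), mul_nonneg hDpos (abs_nonneg x)]
    calc (∫ x in (0:ℝ)..(2 * Real.pi),
          ‖(c : ℂ) * Complex.exp (-(Complex.I * (n : ℂ) * x))
            - (c : ℂ) * Complex.exp (-(Complex.I * mu n * x))‖ ^ 2)
        ≤ ∫ _x in (0:ℝ)..(2 * Real.pi), 8 * Real.pi * D ^ 2 :=
          intervalIntegral.integral_mono_on two_pi_pos.le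
            (hcont.intervalIntegrable _ _) intervalIntegrable_const hb
      _ = 2 * Real.pi * (8 * Real.pi * D ^ 2) := by
          rw [intervalIntegral.integral_const, smul_eq_mul, sub_zero]
      _ ≤ 16 * Real.pi ^ 2 * ‖aCoeff K n‖ ^ 2 := by
          have hD2 : D ^ 2 ≤ ‖aCoeff K n‖ ^ 2 :=
            pow_le_pow_left₀ hDpos (hclose n hn) 2
          have hp := Real.pi_pos
          nlinarith [sq_nonneg Real.pi]
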